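/- Let R be an exchange (suitable) ring equipped with a linear, Hausdorff ring topology. Then the Jacobson radical J(R) is a closed subset of R. -/

import Mathlib

/-- The Jacobson radical of a (possibly noncommutative) ring, as the intersection of the
maximal left ideals. -/
def jacobsonRad (R : Type*) [Ring R] : Ideal R := Ideal.jacobson ⊥
/-- A ring is *suitable* (equivalently, an exchange ring) if whenever `x + y = 1` there are
orthogonal idempotents `e ∈ Rx`, `f ∈ Ry` with `e + f = 1`. -/
def IsSuitableRing (R : Type*) [Ring R] : Prop :=
  ∀ x y : R, x + y = 1 →
    ∃ e f : R, IsIdempotentElem e ∧ IsIdempotentElem f ∧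
      (∃ r, e = r * x) ∧ (∃ s, f = s * y) ∧ e * f = 0 ∧ f * e = 0 ∧ e + f = 1
/-- A ring topology is *linear* if `0` has a neighborhood basis consisting of left ideals. -/
def HasLinearTopology (R : Type*) [Ring R] [TopologicalSpace R] : Prop :=
  ∀ U ∈ nhds (0 : R), ∃ I : Ideal R, (I : Set R) ∈ nhds (0 : R) ∧ (I : Set R) ⊆ U

/-- Elements of the Jacobson radical are left quasi-regular: `1 - x` has a left inverse. -/
lemma exists_left_inv_one_sub_of_mem_jacobsonRad {R : Type*} [Ring R] {x : R}
    (hx : x ∈ jacobsonRad R) : ∃ u : R, u * (1 - x) = 1 := by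
  by_contra h
  push_neg at h
  have hspan : Ideal.span {(1 : R) - x} ≠ ⊤ := by
    intro htop
    have h1 : (1 : R) ∈ Ideal.span {(1 : R) - x} := htop ▸ Submodule.mem_top
    obtain ⟨u, hu⟩ := Submodule.mem_span_singleton.mp h1
    exact h u (by simpa [smul_eq_mul] using hu)
  obtain ⟨M, hMmax, hle⟩ := Ideal.exists_le_maximal _ hspan
  rw [jacobsonRad, Ideal.jacobson] at hx
  have hxM : x ∈ M := Submodule.mem_sInf.mp hx M ⟨bot_le, hMmax⟩
  have h1x : (1 : R) - x ∈ M := hle (Ideal.subset_span rfl)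
  have h1M : (1 : R) ∈ M := by
    have := M.add_mem hxM h1x
    simpa using this
  exact hMmax.ne_top ((Ideal.eq_top_iff_one M).mpr h1M)

/-- Lemma 6. In an exchange (suitable) ring with a linear Hausdorff
ring topology, the Jacobson radical is closed. -/
theorem suitable_linear_hausdorff_jacobson_closed
    (R : Type*) [Ring R] [TopologicalSpace R] [IsTopologicalRing R] [T2Space R]
    (hlin : HasLinearTopology R) (hsuit : IsSuitableRing R) :
    IsClosed ((jacobsonRad R : Ideal R) : Set R) := by
  apply isClosed_of_closure_subset
  intro z hz
  show z ∈ jacobsonRad R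
  rw [jacobsonRad, Ideal.jacobson]
  refine Submodule.mem_sInf.mpr ?_
  rintro M ⟨-, hMmax⟩
  by_contra hzM
  have hsup : M ⊔ Ideal.span {z} = ⊤ := by
    by_contra hne
    have heq : M = M ⊔ Ideal.span {z} := hMmax.eq_of_le hne le_sup_left
    have hzs : z ∈ M ⊔ Ideal.span {z} :=
      Submodule.mem_sup_right (Ideal.subset_span rfl)
    rw [← heq] at hzs
    exact hzM hzs
  have h1 : (1 : R) ∈ M ⊔ Ideal.span {z} := hsup ▸ Submodule.mem_top
  obtain ⟨m, hm, y, hy, hmy⟩ := Submodule.mem_sup.mp h1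
  obtain ⟨a, ha⟩ := Submodule.mem_span_singleton.mp hy
  have hxy : a * z + m = 1 := by rw [← hmy, ← ha, smul_eq_mul, add_comm]
  obtain ⟨e, f, he, hf, ⟨r, hre⟩, ⟨s, hsf⟩, hef, hfe, hef1⟩ := hsuit (a * z) m hxy
  have hfM : f ∈ M := hsf ▸ Ideal.mul_mem_left M s hm
  -- Claim: e lies in every left ideal that is a neighborhood of 0.
  have hclaim : ∀ I : Ideal R, (I : Set R) ∈ nhds (0 : R) → e ∈ I := by
    intro I hI
    set g : R := e * (r * a) with hg
    have hgz : g * z = e := by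
      have h' : g * z = e * (r * (a * z)) := by simp [hg, mul_assoc]
      rw [h', ← hre]
      exact he
    have hcont : Continuous fun x : R => g * x * e - e :=
      ((continuous_const.mul continuous_id).mul continuous_const).sub continuous_const
    have hmem : {x : R | g * x * e - e ∈ (I : Set R)} ∈ nhds z := by
      have h0 : g * z * e - e = 0 := by rw [hgz, he, sub_self]
      have h0' : (I : Set R) ∈ nhds (g * z * e - e) := by rw [h0]; exact hI
      exact hcont.continuousAt (x := z) |>.preimage_mem_nhds h0'
    obtain ⟨j, hjU, hjJ⟩ := mem_closure_iff_nhds.mp hz _ hmem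
    set x₀ : R := g * j with hx0
    have hx₀J : x₀ ∈ jacobsonRad R := Ideal.mul_mem_left _ g hjJ
    obtain ⟨u, hu⟩ := exists_left_inv_one_sub_of_mem_jacobsonRad hx₀J
    have hex : e * x₀ = x₀ := by
      have : e * g = g := by
        rw [hg, ← mul_assoc, he]
      rw [hx0, ← mul_assoc, this]
    have c1 : e - x₀ * e = (1 - x₀) * e := by rw [sub_mul, one_mul]
    have c2 : e * ((1 - x₀) * e) = (1 - x₀) * e := by
      have h3 : e * (1 - x₀) * e = (e - x₀) * e := by rw [mul_sub, mul_one, hex]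
      rw [← mul_assoc, h3, sub_mul, he, sub_mul, one_mul]
    have key : (1 + x₀ * u * e) * (e - x₀ * e) = e := by
      calc (1 + x₀ * u * e) * (e - x₀ * e)
          = (1 + x₀ * u * e) * ((1 - x₀) * e) := by rw [c1]
        _ = (1 - x₀) * e + x₀ * u * (e * ((1 - x₀) * e)) := by
            rw [add_mul, one_mul, mul_assoc (x₀ * u) e]
        _ = (1 - x₀) * e + x₀ * u * ((1 - x₀) * e) := by rw [c2]
        _ = (1 - x₀) * e + x₀ * (u * (1 - x₀)) * e := by
            simp [mul_assoc]
        _ = (1 - x₀) * e + x₀ * e := by rw [hu, mul_one]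
        _ = e := by rw [sub_mul, one_mul, sub_add_cancel]
    have hdif : e - x₀ * e ∈ I := by
      have hmemI : g * j * e - e ∈ I := hjU
      have h2 : x₀ * e = g * j * e := by rw [hx0]
      have := I.neg_mem hmemI
      rw [neg_sub] at this
      rwa [h2]
    have := Ideal.mul_mem_left I (1 + x₀ * u * e) hdif
    rwa [key] at this
  -- Hence, by Hausdorffness, e = 0.
  have he0 : e = 0 := by
    have hmem0 : ∀ U ∈ nhds (0 : R), e ∈ U := by
      intro U hU
      obtain ⟨I, hI, hIU⟩ := hlin U hU
      exact hIU (hclaim I hI)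
    have h0cl : (0 : R) ∈ closure {e} :=
      mem_closure_iff_nhds.mpr (fun U hU => ⟨e, hmem0 U hU, rfl⟩)
    rw [closure_singleton] at h0cl
    exact (Set.mem_singleton_iff.mp h0cl).symm
  have hf1 : f = 1 := by rw [← hef1, he0, zero_add]
  exact hMmax.ne_top ((Ideal.eq_top_iff_one M).mpr (hf1 ▸ hfM))
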